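/- arXiv:1511.02394 — 4 statements merged into one kernel-verified Lean document; each statement's English description precedes it below -/
import Mathlib

section
/- Let K ⊆ R^d be compact convex with B(0,ρ) ⊆ K for some ρ > 0, let Λ be a full-rank lattice with covering radius μ(Λ), and let 0 < a < ρ/(2μ(Λ)). Then K ⊆ (K ∩ aΛ) + B(0, 2aμ(Λ)(1 + diam(K)/ρ)); in particular d_H(K, K ∩ aΛ) ≤ 2aμ(Λ)(1 + diam(K)/ρ). -/
open Metric
open scoped Pointwise

/-- Let `K ⊆ ℝ^d` be compact convex with `B(0,ρ) ⊆ K`, let `aΛ` be a scaled lattice with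
covering radius at most `aμ`, and `0 < a < ρ/(2μ)`. Then
`K ⊆ (K ∩ aΛ) + B(0, 2aμ(1 + diam K/ρ))`, and in particular
`d_H(K, K ∩ aΛ) ≤ 2aμ(1 + diam K/ρ)`. -/
theorem convex_lattice_sample {d : ℕ} (Λ : Set (EuclideanSpace ℝ (Fin d)))
    (μ ρ a : ℝ) (hμ : 0 < μ) (hρ : 0 < ρ) (ha : 0 < a) (ha' : a < ρ / (2 * μ))
    (hcov : ∀ x : EuclideanSpace ℝ (Fin d), ∃ z ∈ a • Λ, dist x z ≤ a * μ)
    (K : Set (EuclideanSpace ℝ (Fin d))) (hKc : IsCompact K) (hconv : Convex ℝ K)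
    (hball : closedBall 0 ρ ⊆ K) :
    K ⊆ (K ∩ a • Λ) + closedBall 0 (2 * a * μ * (1 + diam K / ρ)) ∧
      hausdorffDist K (K ∩ a • Λ) ≤ 2 * a * μ * (1 + diam K / ρ) := by
  have hdiam : 0 ≤ diam K := diam_nonneg
  set R := 2 * a * μ * (1 + diam K / ρ) with hRdef
  have hRpos : 0 ≤ R := by positivity
  have h0K : (0 : EuclideanSpace ℝ (Fin d)) ∈ K := hball (by simp [hρ.le])
  have htρ : 2 * a * μ < ρ := by
    rw [lt_div_iff₀ (by positivity)] at ha'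
    nlinarith
  set t : ℝ := 2 * a * μ / ρ with htdef
  have ht0 : 0 < t := by positivity
  have ht1 : t < 1 := (div_lt_one hρ).2 htρ
  have key : ∀ x ∈ K, ∃ z ∈ K ∩ a • Λ, dist x z ≤ R := by
    intro x hx
    obtain ⟨z, hzΛ, hz⟩ := hcov ((1 - t) • x)
    have hzy : ‖z - (1 - t) • x‖ ≤ a * μ := by
      rw [← dist_eq_norm, dist_comm]; exact hz
    set w := t⁻¹ • (z - (1 - t) • x) with hwdef
    have hwK : w ∈ K := by
      apply hball
      simp only [mem_closedBall, dist_zero_right]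
      rw [hwdef, norm_smul, norm_inv, Real.norm_of_nonneg ht0.le]
      have h1 : t⁻¹ * ‖z - (1 - t) • x‖ ≤ t⁻¹ * (a * μ) :=
        mul_le_mul_of_nonneg_left hzy (inv_nonneg.2 ht0.le)
      have h2 : t⁻¹ * (a * μ) = ρ / 2 := by
        rw [htdef]
        field_simp
      linarith
    have hzK : z ∈ K := by
      have hzeq : z = (1 - t) • x + t • w := by
        rw [hwdef, smul_inv_smul₀ ht0.ne']
        abel
      rw [hzeq]
      exact hconv hx hwK (by linarith) ht0.le (by ring)
    refine ⟨z, ⟨hzK, hzΛ⟩, ?_⟩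
    have hxn : ‖x‖ ≤ diam K := by
      have := dist_le_diam_of_mem hKc.isBounded hx h0K
      simpa using this
    have hd1 : dist x ((1 - t) • x) = t * ‖x‖ := by
      rw [dist_eq_norm]
      have : x - (1 - t) • x = t • x := by
        rw [sub_smul, one_smul]; abel
      rw [this, norm_smul, Real.norm_of_nonneg ht0.le]
    have hd : dist x z ≤ t * ‖x‖ + a * μ :=
      le_trans (dist_triangle x ((1 - t) • x) z) (by rw [hd1]; linarith)
    have h3 : t * ‖x‖ ≤ t * diam K := mul_le_mul_of_nonneg_left hxn ht0.le
    have h4 : t * diam K = 2 * a * μ * (diam K / ρ) := by rw [htdef]; ring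
    have h5 : R = 2 * a * μ + 2 * a * μ * (diam K / ρ) := by rw [hRdef]; ring
    nlinarith [mul_pos ha hμ]
  refine ⟨?_, ?_⟩
  · intro x hx
    obtain ⟨z, hz, hd⟩ := key x hx
    refine ⟨z, hz, x - z, ?_, by module⟩
    simpa [dist_eq_norm, dist_comm] using hd
  · refine hausdorffDist_le_of_mem_dist hRpos ?_ ?_
    · intro x hx
      obtain ⟨z, hz, hd⟩ := key x hx
      exact ⟨z, hz, hd⟩
    · intro z hz
      exact ⟨z, hz.1, by simp [hRpos]⟩
end

section
/- Let Λ ⊆ R^d be a full-rank lattice with Voronoi cell V_0(Λ) of the origin, let K ⊆ R^d be compact with the boundary of K having d-dimensional Lebesgue measure zero, and let C > 0 satisfy V_0(Λ) ⊆ B(0,C). Then the symmetric difference of K and the union ⋃_{z ∈ K ∩ aΛ}(z + aV_0(Λ)) is contained in the aC-neighborhood of ∂K; consequently its Lebesgue measure tends to 0 as a → 0+. -/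
open Metric Filter MeasureTheory
open scoped Pointwise

lemma seg_frontier {E : Type*} [NormedAddCommGroup E] [NormedSpace ℝ E]
    {K : Set E} {p q : E} (hp : p ∈ K) (hq : q ∉ K) :
    ∃ w ∈ frontier K, dist p w ≤ dist p q ∧ dist q w ≤ dist p q := by
  have hseg : IsPreconnected (segment ℝ p q) := (convex_segment p q).isPreconnected
  have hne : ∃ w ∈ segment ℝ p q, w ∈ frontier K := by
    by_contra h
    push_neg at h
    have hsub : segment ℝ p q ⊆ interior K ∪ (closure K)ᶜ := by
      intro x hx
      by_cases hc : x ∈ closure K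
      · left
        by_contra hi
        exact h x hx ⟨hc, hi⟩
      · exact Or.inr hc
    have h1 : (segment ℝ p q ∩ interior K).Nonempty := by
      refine ⟨p, left_mem_segment ℝ p q, ?_⟩
      have hc : p ∈ closure K := subset_closure hp
      by_contra hi
      exact h p (left_mem_segment ℝ p q) ⟨hc, hi⟩
    have h2 : (segment ℝ p q ∩ (closure K)ᶜ).Nonempty := by
      refine ⟨q, right_mem_segment ℝ p q, ?_⟩
      intro hc
      exact h q (right_mem_segment ℝ p q) ⟨hc, fun hi => hq (interior_subset hi)⟩
    obtain ⟨x, -, hx⟩ := hseg (interior K) (closure K)ᶜ isOpen_interior isClosed_closure.isOpen_compl hsub h1 h2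
    exact hx.2 (subset_closure (interior_subset hx.1))
  obtain ⟨w, hw, hwf⟩ := hne
  refine ⟨w, hwf, ?_, ?_⟩
  · have := dist_add_dist_of_mem_segment hw
    linarith [dist_nonneg (x := w) (y := q)]
  · have := dist_add_dist_of_mem_segment hw
    rw [dist_comm q w]
    linarith [dist_nonneg (x := p) (y := w)]

/-- Let `Λ ⊆ ℝ^d` be a lattice with Voronoi cell `V₀ = {x : ∀ z ∈ Λ, |x| ≤ |x−z|}` satisfying
`V₀ ⊆ B(0,C)`, whose translates cover `ℝ^d`, and let `K` be compact with `ℋ^d(∂K) = 0`. Then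
for every `a > 0` the symmetric difference of `K` and `⋃_{z ∈ K ∩ aΛ} (z + aV₀)` is contained
in the closed `aC`-neighborhood of `∂K`, and its Lebesgue measure tends to `0` as `a → 0⁺`. -/
theorem digitization_symmDiff {d : ℕ} (Λ V₀ : Set (EuclideanSpace ℝ (Fin d))) (C : ℝ)
    (hC : 0 < C) (hV₀def : V₀ = {x | ∀ z ∈ Λ, ‖x‖ ≤ ‖x - z‖})
    (hV₀C : V₀ ⊆ closedBall 0 C)
    (hcov : ∀ x : EuclideanSpace ℝ (Fin d), ∃ z ∈ Λ, x - z ∈ V₀)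
    (K : Set (EuclideanSpace ℝ (Fin d))) (hK : IsCompact K) (hne : K.Nonempty)
    (hbd : volume (frontier K) = 0) :
    (∀ a : ℝ, 0 < a →
      symmDiff K (⋃ z ∈ K ∩ a • Λ, (fun y => z + y) '' (a • V₀)) ⊆
        {x | infDist x (frontier K) ≤ a * C}) ∧
    Tendsto (fun a : ℝ =>
        volume (symmDiff K (⋃ z ∈ K ∩ a • Λ, (fun y => z + y) '' (a • V₀))))
      (nhdsWithin 0 (Set.Ioi 0)) (nhds 0) := by
  -- main containment: symmDiff gives a frontier point within a*C
  have key : ∀ a : ℝ, 0 < a → ∀ x ∈ symmDiff K (⋃ z ∈ K ∩ a • Λ, (fun y => z + y) '' (a • V₀)),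
      ∃ w ∈ frontier K, dist x w ≤ a * C := by
    intro a ha x hx
    rw [Set.mem_symmDiff] at hx
    rcases hx with ⟨hxK, hxU⟩ | ⟨hxU, hxK⟩
    · -- x ∈ K, not covered: the lattice point covering x is outside K
      obtain ⟨z, hz, hzv⟩ := hcov (a⁻¹ • x)
      set y := a • z with hy
      have hyΛ : y ∈ a • Λ := ⟨z, hz, rfl⟩
      have hxy : x - y ∈ a • V₀ := by
        refine ⟨a⁻¹ • x - z, hzv, ?_⟩
        simp [hy, smul_sub, smul_smul, mul_inv_cancel₀ ha.ne']
      have hdist : dist x y ≤ a * C := by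
        obtain ⟨v, hv, hveq⟩ := hxy
        have : ‖x - y‖ = a * ‖v‖ := by
          rw [← hveq, norm_smul, Real.norm_eq_abs, abs_of_pos ha]
        have hvC : ‖v‖ ≤ C := by simpa using hV₀C hv
        rw [dist_eq_norm, this]
        exact mul_le_mul_of_nonneg_left hvC ha.le
      have hyK : y ∉ K := by
        intro hyK
        apply hxU
        refine Set.mem_iUnion₂.2 ⟨y, ⟨hyK, hyΛ⟩, ?_⟩
        exact ⟨x - y, hxy, add_sub_cancel y x⟩
      obtain ⟨w, hwf, hw1, -⟩ := seg_frontier hxK hyK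
      exact ⟨w, hwf, hw1.trans hdist⟩
    · obtain ⟨z, hzmem, hxz⟩ := Set.mem_iUnion₂.1 hxU
      obtain ⟨v', hv', hveq⟩ := hxz
      obtain ⟨v, hv, hveq'⟩ := hv'
      have hdist : dist z x ≤ a * C := by
        have : x - z = a • v := by
          rw [← hveq, ← hveq']; exact add_sub_cancel_left z _
        have hvC : ‖v‖ ≤ C := by simpa using hV₀C hv
        rw [dist_comm, dist_eq_norm, this, norm_smul, Real.norm_eq_abs, abs_of_pos ha]
        exact mul_le_mul_of_nonneg_left hvC ha.le
      obtain ⟨w, hwf, -, hw2⟩ := seg_frontier hzmem.1 hxK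
      exact ⟨w, hwf, hw2.trans hdist⟩
  have hsub : ∀ a : ℝ, 0 < a →
      symmDiff K (⋃ z ∈ K ∩ a • Λ, (fun y => z + y) '' (a • V₀)) ⊆
        cthickening (a * C) (frontier K) := by
    intro a ha x hx
    obtain ⟨w, hwf, hw⟩ := key a ha x hx
    exact mem_cthickening_of_dist_le x w _ _ hwf hw
  constructor
  · intro a ha x hx
    obtain ⟨w, hwf, hw⟩ := key a ha x hx
    exact (infDist_le_dist_of_mem hwf).trans hw
  · -- frontier K compact
    have hfK : IsCompact (frontier K) := hK.of_isClosed_subset isClosed_frontier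
      (frontier_subset_closure.trans hK.isClosed.closure_eq.subset)
    have hfin : ∃ R > 0, volume (cthickening R (frontier K)) ≠ ⊤ := by
      refine ⟨1, one_pos, ?_⟩
      exact (hfK.cthickening).measure_lt_top.ne
    have h1 : Tendsto (fun r : ℝ => volume (cthickening r (frontier K))) (nhds 0) (nhds 0) := by
      have := tendsto_measure_cthickening_of_isClosed (μ := volume) hfin isClosed_frontier
      rwa [hbd] at this
    have h2 : Tendsto (fun a : ℝ => a * C) (nhdsWithin 0 (Set.Ioi 0)) (nhds 0) := by
      have : Tendsto (fun a : ℝ => a * C) (nhds 0) (nhds 0) := by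
        simpa using (continuous_mul_right C).tendsto 0
      exact this.mono_left nhdsWithin_le_nhds
    have h3 : Tendsto (fun a : ℝ => volume (cthickening (a * C) (frontier K)))
        (nhdsWithin 0 (Set.Ioi 0)) (nhds 0) := h1.comp h2
    refine tendsto_of_tendsto_of_tendsto_of_le_of_le' (tendsto_const_nhds) h3
      (Eventually.of_forall fun a => zero_le) ?_
    filter_upwards [self_mem_nhdsWithin] with a (ha : a ∈ Set.Ioi 0)
    exact measure_mono (hsub a ha)
end

section
/- Let K ⊆ R^d be compact with ℋ^d(∂K) = 0, Λ a full-rank lattice with Voronoi cell V_0(Λ) ⊆ B(0,C), and r ∈ ℕ. Define φ_d^{r,0}(K ∩ aΛ) = (1/r!) Σ_{z ∈ K∩aΛ} ∫_{z + aV_0(Λ)} x^{⊗r} dx and Φ_d^{r,0}(K) = (1/r!) ∫_K x^{⊗r} dx (tensor-valued integrals). Then |φ_d^{r,0}(K ∩ aΛ) − Φ_d^{r,0}(K)| ≤ (1/r!) ∫_{(∂K)^{aC}} |x|^r dx, and hence φ_d^{r,0}(K ∩ aΛ) → Φ_d^{r,0}(K) as a → 0+. -/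
set_option maxHeartbeats 1000000
set_option synthInstance.maxHeartbeats 400000


open Metric Filter MeasureTheory
open scoped Pointwise BigOperators

/-- The tensor power `x^{⊗r}` of `x ∈ ℝ^d`, viewed as the continuous multilinear form
`(v₁, …, v_r) ↦ ∏ i, ⟪x, v i⟫`. -/
noncomputable def tpow {d : ℕ} (r : ℕ) (x : EuclideanSpace ℝ (Fin d)) :
    ContinuousMultilinearMap ℝ (fun _ : Fin r => EuclideanSpace ℝ (Fin d)) ℝ :=
  (ContinuousMultilinearMap.mkPiAlgebra ℝ (Fin r) ℝ).compContinuousLinearMap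
    fun _ => innerSL ℝ x

/-- The digital volume-tensor estimator
`φ_d^{r,0}(K ∩ aΛ) = (1/r!) ∑_{z ∈ K ∩ aΛ} ∫_{z + aV₀} x^{⊗r} dx`. -/
noncomputable def phiVol {d : ℕ} (r : ℕ) (Λ V₀ K : Set (EuclideanSpace ℝ (Fin d)))
    (a : ℝ) : ContinuousMultilinearMap ℝ (fun _ : Fin r => EuclideanSpace ℝ (Fin d)) ℝ :=
  ((r.factorial : ℝ))⁻¹ •
    ∑' z : ↥(K ∩ a • Λ), ∫ x in (fun y => (z : EuclideanSpace ℝ (Fin d)) + y) '' (a • V₀),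
      tpow r x ∂volume

/-- The volume tensor `Φ_d^{r,0}(K) = (1/r!) ∫_K x^{⊗r} dx`. -/
noncomputable def PhiVol {d : ℕ} (r : ℕ) (K : Set (EuclideanSpace ℝ (Fin d))) :
    ContinuousMultilinearMap ℝ (fun _ : Fin r => EuclideanSpace ℝ (Fin d)) ℝ :=
  ((r.factorial : ℝ))⁻¹ • ∫ x in K, tpow r x ∂volume

lemma tpow_continuous {d : ℕ} (r : ℕ) : Continuous (tpow (d := d) r) := by
  have : tpow (d := d) r = fun x =>
      (ContinuousMultilinearMap.compContinuousLinearMapLRight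
        (ContinuousMultilinearMap.mkPiAlgebra ℝ (Fin r) ℝ)) (fun _ => innerSL ℝ x) := by
    funext x
    rw [ContinuousMultilinearMap.compContinuousLinearMapLRight_apply]
    rfl
  rw [this]
  exact (ContinuousMultilinearMap.compContinuousLinearMapLRight
    (ContinuousMultilinearMap.mkPiAlgebra ℝ (Fin r) ℝ)).cont.comp
    (continuous_pi fun _ => (innerSL ℝ).continuous)

lemma tpow_norm_le {d : ℕ} (r : ℕ) (x : EuclideanSpace ℝ (Fin d)) :
    ‖tpow r x‖ ≤ ‖x‖ ^ r := by
  calc ‖tpow r x‖ ≤ ‖ContinuousMultilinearMap.mkPiAlgebra ℝ (Fin r) ℝ‖ *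
        ∏ _i : Fin r, ‖innerSL ℝ x‖ :=
      ContinuousMultilinearMap.norm_compContinuousLinearMap_le _ _
    _ = ‖x‖ ^ r := by
      simp [ContinuousMultilinearMap.norm_mkPiAlgebra, innerSL_apply_norm]

lemma segment_frontier' {E : Type*} [NormedAddCommGroup E] [NormedSpace ℝ E] {K : Set E}
    {x y : E} (hx : x ∈ K) (hy : y ∉ K) : ∃ p ∈ frontier K, p ∈ segment ℝ x y := by
  by_contra h
  push_neg at h
  have hseg : IsPreconnected (segment ℝ x y) := (convex_segment x y).isPreconnected
  have hcup : segment ℝ x y ⊆ interior K ∪ (closure K)ᶜ := by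
    intro p hp
    have hpf : p ∉ frontier K := fun hf => h p hf hp
    by_cases hpc : p ∈ closure K
    · left
      by_contra hpi
      exact hpf ⟨hpc, hpi⟩
    · right; exact hpc
  have h1 : (segment ℝ x y ∩ interior K).Nonempty := by
    refine ⟨x, left_mem_segment ℝ x y, ?_⟩
    by_contra hxi
    exact h x ⟨subset_closure hx, hxi⟩ (left_mem_segment ℝ x y)
  have h2 : (segment ℝ x y ∩ (closure K)ᶜ).Nonempty := by
    refine ⟨y, right_mem_segment ℝ x y, ?_⟩
    intro hyc
    exact h y ⟨hyc, fun hyi => hy (interior_subset hyi)⟩ (right_mem_segment ℝ x y)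
  obtain ⟨p, -, hp1, hp2⟩ := hseg _ _ isOpen_interior (isClosed_closure.isOpen_compl) hcup h1 h2
  exact hp2 (subset_closure (interior_subset hp1))

lemma dist_le_of_mem_segment' {E : Type*} [NormedAddCommGroup E] [NormedSpace ℝ E]
    {x y p : E} (hp : p ∈ segment ℝ x y) : dist x p ≤ dist x y := by
  obtain ⟨a, b, ha, hb, hab, rfl⟩ := hp
  have : x - (a • x + b • y) = b • (x - y) := by
    rw [smul_sub]
    rw [show a • x + b • y = x - b • x + b • y by
      rw [show a = 1 - b by linarith, sub_smul, one_smul]]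
    abel
  rw [dist_eq_norm, this, norm_smul, Real.norm_eq_abs, abs_of_nonneg hb, dist_eq_norm]
  nlinarith [norm_nonneg (x - y), hb, hab]

/-- If `K ⊆ ℝ^d` is compact with `ℋ^d(∂K) = 0`, and `Λ` is a lattice whose Voronoi cell
`V₀ ⊆ B(0,C)` tiles `ℝ^d` (cover with pairwise null overlaps), then
`|φ_d^{r,0}(K ∩ aΛ) − Φ_d^{r,0}(K)| ≤ (1/r!) ∫_{(∂K)^{aC}} |x|^r dx` for all `a > 0`, and
consequently `φ_d^{r,0}(K ∩ aΛ) → Φ_d^{r,0}(K)` as `a → 0⁺`. -/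
theorem phiVol_tendsto {d : ℕ} (r : ℕ) (Λ V₀ : Set (EuclideanSpace ℝ (Fin d))) (C : ℝ)
    (hC : 0 < C) (hV₀def : V₀ = {x | ∀ z ∈ Λ, ‖x‖ ≤ ‖x - z‖})
    (hV₀C : V₀ ⊆ closedBall 0 C)
    (hcov : ∀ x : EuclideanSpace ℝ (Fin d), ∃ z ∈ Λ, x - z ∈ V₀)
    (hnull : ∀ z ∈ Λ, ∀ z' ∈ Λ, z ≠ z' →
      volume (((fun y => z + y) '' V₀) ∩ ((fun y => z' + y) '' V₀)) = 0)
    (K : Set (EuclideanSpace ℝ (Fin d))) (hK : IsCompact K) (hne : K.Nonempty)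
    (hbd : volume (frontier K) = 0)
    (hfin : ∀ a : ℝ, 0 < a → (K ∩ a • Λ).Finite) :
    (∀ a : ℝ, 0 < a →
      ‖phiVol r Λ V₀ K a - PhiVol r K‖ ≤
        ((r.factorial : ℝ))⁻¹ *
          ∫ x in {x | infDist x (frontier K) ≤ a * C}, ‖x‖ ^ r ∂volume) ∧
    Tendsto (fun a : ℝ => phiVol r Λ V₀ K a) (nhdsWithin 0 (Set.Ioi 0))
      (nhds (PhiVol r K)) := by
  classical
  set f : EuclideanSpace ℝ (Fin d) → ContinuousMultilinearMap ℝ (fun _ : Fin r => EuclideanSpace ℝ (Fin d)) ℝ := tpow r with hf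
  set F : Set (EuclideanSpace ℝ (Fin d)) := frontier K with hFdef
  set N : ℝ → Set (EuclideanSpace ℝ (Fin d)) := fun a => {x | infDist x F ≤ a * C} with hNdef
  set U : ℝ → Set (EuclideanSpace ℝ (Fin d)) := fun a =>
    ⋃ z : ↥(K ∩ a • Λ), (fun y => (z : EuclideanSpace ℝ (Fin d)) + y) '' (a • V₀) with hUdef
  have hV₀closed : IsClosed V₀ := by
    rw [hV₀def]
    have : {x : EuclideanSpace ℝ (Fin d) | ∀ z ∈ Λ, ‖x‖ ≤ ‖x - z‖}
        = ⋂ z ∈ Λ, {x : EuclideanSpace ℝ (Fin d) | ‖x‖ ≤ ‖x - z‖} := by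
      ext x; simp
    rw [this]
    exact isClosed_biInter fun z _ =>
      isClosed_le continuous_norm ((continuous_id.sub continuous_const).norm)
  have hV₀cpt : IsCompact V₀ :=
    (isCompact_closedBall (0 : EuclideanSpace ℝ (Fin d)) C).of_isClosed_subset hV₀closed hV₀C
  have hKm : MeasurableSet K := hK.isClosed.measurableSet
  have hfK : IntegrableOn f K := (tpow_continuous r).locallyIntegrable.integrableOn_isCompact hK
  have hcellcpt : ∀ (a : ℝ) (z : EuclideanSpace ℝ (Fin d)), IsCompact ((fun y => z + y) '' (a • V₀)) :=
    fun a z => (hV₀cpt.smul a).image (continuous_const.add continuous_id)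
  have hNmeas : ∀ a : ℝ, MeasurableSet (N a) := fun a =>
    (isClosed_le (continuous_infDist_pt F) continuous_const).measurableSet
  -- U a is compact
  have hUcpt : ∀ a : ℝ, 0 < a → IsCompact (U a) := by
    intro a ha
    haveI : Finite ↥(K ∩ a • Λ) := (hfin a ha).to_subtype
    exact isCompact_iUnion fun z => hcellcpt a _
  have hUm : ∀ a : ℝ, 0 < a → MeasurableSet (U a) := fun a ha =>
    (hUcpt a ha).isClosed.measurableSet
  have hfU : ∀ a : ℝ, 0 < a → IntegrableOn f (U a) := fun a ha =>
    (tpow_continuous r).locallyIntegrable.integrableOn_isCompact (hUcpt a ha)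
  -- φ equals (1/r!) ∫_{U a} f
  have hphi : ∀ a : ℝ, 0 < a →
      phiVol r Λ V₀ K a = ((r.factorial : ℝ))⁻¹ • ∫ x in U a, f x ∂volume := by
    intro a ha
    haveI : Finite ↥(K ∩ a • Λ) := (hfin a ha).to_subtype
    have hcell_eq : ∀ w : EuclideanSpace ℝ (Fin d),
        (fun y => a • w + y) '' (a • V₀) = a • ((fun y => w + y) '' V₀) := by
      intro w
      ext x
      simp only [Set.mem_image, Set.mem_smul_set]
      constructor
      · rintro ⟨v, ⟨v₀, hv₀, rfl⟩, rfl⟩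
        exact ⟨w + v₀, ⟨v₀, hv₀, rfl⟩, by rw [smul_add]⟩
      · rintro ⟨u, ⟨v₀, hv₀, rfl⟩, rfl⟩
        exact ⟨a • v₀, ⟨v₀, hv₀, rfl⟩, by rw [smul_add]⟩
    have hAED : Pairwise (Function.onFun (AEDisjoint volume)
        fun z : ↥(K ∩ a • Λ) => (fun y => (z : EuclideanSpace ℝ (Fin d)) + y) '' (a • V₀)) := by
      rintro z z' hzz'
      have hzc : (z : EuclideanSpace ℝ (Fin d)) ≠ (z' : EuclideanSpace ℝ (Fin d)) := Subtype.coe_injective.ne hzz'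
      obtain ⟨w, hw, hzw⟩ := z.2.2
      obtain ⟨w', hw', hzw'⟩ := z'.2.2
      have hww' : w ≠ w' := by
        rintro rfl
        exact hzc (by rw [← hzw, ← hzw'])
      show volume ((fun y => (z : EuclideanSpace ℝ (Fin d)) + y) '' (a • V₀) ∩
        (fun y => (z' : EuclideanSpace ℝ (Fin d)) + y) '' (a • V₀)) = 0
      rw [← hzw, ← hzw', hcell_eq, hcell_eq, ← Set.smul_set_inter₀ ha.ne',
        Measure.addHaar_smul, hnull w hw w' hw' hww', mul_zero]
    have hmeas : ∀ z : ↥(K ∩ a • Λ),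
        NullMeasurableSet ((fun y => (z : EuclideanSpace ℝ (Fin d)) + y) '' (a • V₀)) volume := fun z =>
      ((hcellcpt a _).isClosed.measurableSet).nullMeasurableSet
    rw [phiVol, integral_iUnion_ae hmeas hAED (hfU a ha)]
  -- key covering fact
  have hmemU : ∀ (a : ℝ), 0 < a → ∀ x : EuclideanSpace ℝ (Fin d), ∃ w ∈ Λ, a⁻¹ • x - w ∈ V₀ ∧
      x = a • w + a • (a⁻¹ • x - w) ∧ ‖x - a • w‖ ≤ a * C := by
    intro a ha x
    obtain ⟨w, hw, hv⟩ := hcov (a⁻¹ • x)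
    refine ⟨w, hw, hv, ?_, ?_⟩
    · rw [← smul_add]
      rw [add_sub_cancel, smul_inv_smul₀ ha.ne']
    · have hx : x - a • w = a • (a⁻¹ • x - w) := by
        rw [smul_sub, smul_inv_smul₀ ha.ne']
      rw [hx, norm_smul, Real.norm_eq_abs, abs_of_pos ha]
      have : ‖a⁻¹ • x - w‖ ≤ C := by
        have := hV₀C hv
        rwa [mem_closedBall, dist_zero_right] at this
      exact mul_le_mul_of_nonneg_left this ha.le
  -- symmetric difference is contained in N a
  have hsub : ∀ a : ℝ, 0 < a → (U a \ K) ∪ (K \ U a) ⊆ N a := by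
    intro a ha x hx
    rcases hx with hx | hx
    · obtain ⟨hxU, hxK⟩ := hx
      obtain ⟨z, hxs⟩ := Set.mem_iUnion.1 hxU
      obtain ⟨u, ⟨v, hv, rfl⟩, rfl⟩ := hxs
      obtain ⟨p, hpF, hpseg⟩ := segment_frontier' z.2.1 hxK
      have h1 : infDist ((z : EuclideanSpace ℝ (Fin d)) + a • v) F ≤ dist ((z : EuclideanSpace ℝ (Fin d)) + a • v) p :=
        infDist_le_dist_of_mem hpF
      have h2 : dist ((z : EuclideanSpace ℝ (Fin d)) + a • v) p ≤ dist ((z : EuclideanSpace ℝ (Fin d)) + a • v) (z : EuclideanSpace ℝ (Fin d)) :=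
        by rw [segment_symm] at hpseg; exact dist_le_of_mem_segment' hpseg
      have h3 : dist ((z : EuclideanSpace ℝ (Fin d)) + a • v) (z : EuclideanSpace ℝ (Fin d)) ≤ a * C := by
        rw [dist_eq_norm, add_sub_cancel_left, norm_smul, Real.norm_eq_abs, abs_of_pos ha]
        have : ‖v‖ ≤ C := by
          have := hV₀C hv
          rwa [mem_closedBall, dist_zero_right] at this
        exact mul_le_mul_of_nonneg_left this ha.le
      exact le_trans h1 (le_trans h2 h3)
    · obtain ⟨hxK, hxU⟩ := hx
      obtain ⟨w, hw, hv, hxe, hnorm⟩ := hmemU a ha x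
      have hawK : a • w ∉ K := by
        intro hawK
        apply hxU
        refine Set.mem_iUnion.2 ⟨⟨a • w, hawK, ⟨w, hw, rfl⟩⟩, ?_⟩
        exact ⟨a • (a⁻¹ • x - w), ⟨a⁻¹ • x - w, hv, rfl⟩, hxe.symm⟩
      obtain ⟨p, hpF, hpseg⟩ := segment_frontier' hxK hawK
      have h1 : infDist x F ≤ dist x p := infDist_le_dist_of_mem hpF
      have h2 : dist x p ≤ dist x (a • w) := dist_le_of_mem_segment' hpseg
      rw [dist_eq_norm] at h2
      exact le_trans h1 (le_trans h2 hnorm)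
  -- case frontier K = ∅ : U a = K = univ
  have hunivcase : F = ∅ → ∀ a : ℝ, 0 < a → U a = K := by
    intro hFe a ha
    haveI : PreconnectedSpace (EuclideanSpace ℝ (Fin d)) :=
      ⟨(convex_univ : Convex ℝ (Set.univ : Set (EuclideanSpace ℝ (Fin d)))).isPreconnected⟩
    have hclopen : IsClopen K := isClopen_iff_frontier_eq_empty.mpr hFe
    have hKuniv : K = Set.univ := by
      rcases isClopen_iff.mp hclopen with h | h
      · exact absurd (h ▸ hne) Set.not_nonempty_empty
      · exact h
    rw [hKuniv]
    apply Set.eq_univ_of_forall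
    intro x
    obtain ⟨w, hw, hv, hxe, -⟩ := hmemU a ha x
    refine Set.mem_iUnion.2 ⟨⟨a • w, by rw [hKuniv]; exact ⟨Set.mem_univ _, ⟨w, hw, rfl⟩⟩⟩, ?_⟩
    exact ⟨a • (a⁻¹ • x - w), ⟨a⁻¹ • x - w, hv, rfl⟩, hxe.symm⟩
  -- the main integral bound
  have hbound : ∀ a : ℝ, 0 < a →
      ‖(∫ x in U a, f x ∂volume) - ∫ x in K, f x ∂volume‖ ≤
        ∫ x in N a, ‖x‖ ^ r ∂volume := by
    intro a ha
    by_cases hFe : F = ∅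
    · rw [hunivcase hFe a ha, sub_self, norm_zero]
      exact setIntegral_nonneg (hNmeas a) fun x _ => by positivity
    · have hFne : F.Nonempty := Set.nonempty_iff_ne_empty.mpr hFe
      -- N a is compact
      have hNcl : IsClosed (N a) := isClosed_le (continuous_infDist_pt F) continuous_const
      obtain ⟨R, hR⟩ := hK.isBounded.subset_closedBall 0
      have hNsub : N a ⊆ closedBall 0 (a * C + 1 + R) := by
        intro x hx
        have hlt : infDist x F < a * C + 1 := lt_of_le_of_lt hx (by linarith)
        obtain ⟨y, hyF, hxy⟩ := (infDist_lt_iff hFne).mp hlt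
        have hyK : y ∈ K := by
          have : y ∈ closure K := frontier_subset_closure hyF
          rwa [hK.isClosed.closure_eq] at this
        have hyR : ‖y‖ ≤ R := by
          have := hR hyK
          rwa [mem_closedBall, dist_zero_right] at this
        rw [mem_closedBall, dist_zero_right]
        calc ‖x‖ ≤ dist x y + ‖y‖ := by
              rw [dist_eq_norm]
              simpa using norm_add_le (x - y) y
          _ ≤ a * C + 1 + R := by linarith
      have hNcpt : IsCompact (N a) := isCompact_of_isClosed_isBounded hNcl
        ((isBounded_closedBall).subset hNsub)
      have hIntN : IntegrableOn (fun x : EuclideanSpace ℝ (Fin d) => ‖x‖ ^ r) (N a) :=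
        (continuous_norm.pow r).locallyIntegrable.integrableOn_isCompact hNcpt
      -- split integrals
      have hsplitU := integral_inter_add_diff (μ := volume) (f := f) hKm (hfU a ha)
      have hsplitK := integral_inter_add_diff (μ := volume) (f := f) (hUm a ha) hfK
      have heq : (∫ x in U a, f x ∂volume) - ∫ x in K, f x ∂volume =
          (∫ x in U a \ K, f x ∂volume) - ∫ x in K \ U a, f x ∂volume := by
        rw [← hsplitU, ← hsplitK, Set.inter_comm]
        abel
      rw [heq]
      have hnf : Continuous fun x : EuclideanSpace ℝ (Fin d) => ‖f x‖ := (tpow_continuous r).norm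
      have hd1 : MeasurableSet (U a \ K) := (hUm a ha).diff hKm
      have hd2 : MeasurableSet (K \ U a) := hKm.diff (hUm a ha)
      have hIf1 : IntegrableOn (fun x => ‖f x‖) (U a \ K) :=
        ((hnf.locallyIntegrable.integrableOn_isCompact (hUcpt a ha)).mono_set Set.diff_subset)
      have hIf2 : IntegrableOn (fun x => ‖f x‖) (K \ U a) :=
        ((hnf.locallyIntegrable.integrableOn_isCompact hK).mono_set Set.diff_subset)
      have hIg1 : IntegrableOn (fun x : EuclideanSpace ℝ (Fin d) => ‖x‖ ^ r) (U a \ K) :=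
        (((continuous_norm.pow r).locallyIntegrable.integrableOn_isCompact (hUcpt a ha)).mono_set Set.diff_subset)
      have hIg2 : IntegrableOn (fun x : EuclideanSpace ℝ (Fin d) => ‖x‖ ^ r) (K \ U a) :=
        (((continuous_norm.pow r).locallyIntegrable.integrableOn_isCompact hK).mono_set Set.diff_subset)
      calc ‖(∫ x in U a \ K, f x ∂volume) - ∫ x in K \ U a, f x ∂volume‖
          ≤ ‖∫ x in U a \ K, f x ∂volume‖ + ‖∫ x in K \ U a, f x ∂volume‖ := norm_sub_le _ _
        _ ≤ (∫ x in U a \ K, ‖f x‖ ∂volume) + ∫ x in K \ U a, ‖f x‖ ∂volume := by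
            gcongr <;> exact norm_integral_le_integral_norm _
        _ ≤ (∫ x in U a \ K, ‖x‖ ^ r ∂volume) + ∫ x in K \ U a, ‖x‖ ^ r ∂volume := by
            gcongr ?_ + ?_
            · exact setIntegral_mono_on hIf1 hIg1 hd1 fun x _ => tpow_norm_le r x
            · exact setIntegral_mono_on hIf2 hIg2 hd2 fun x _ => tpow_norm_le r x
        _ = ∫ x in (U a \ K) ∪ (K \ U a), ‖x‖ ^ r ∂volume := by
            rw [setIntegral_union (disjoint_sdiff_sdiff) hd2 hIg1 hIg2]
        _ ≤ ∫ x in N a, ‖x‖ ^ r ∂volume := by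
            apply setIntegral_mono_set hIntN
            · exact Filter.Eventually.of_forall fun x => by positivity
            · exact Filter.Eventually.of_forall (hsub a ha)
  -- Part 1
  have part1 : ∀ a : ℝ, 0 < a →
      ‖phiVol r Λ V₀ K a - PhiVol r K‖ ≤
        ((r.factorial : ℝ))⁻¹ * ∫ x in N a, ‖x‖ ^ r ∂volume := by
    intro a ha
    rw [hphi a ha, PhiVol]
    have hsm : ((r.factorial : ℝ))⁻¹ • (∫ x in U a, f x ∂volume) -
        ((r.factorial : ℝ))⁻¹ • ∫ x in K, tpow r x ∂volume =
        ((r.factorial : ℝ))⁻¹ • ((∫ x in U a, f x ∂volume) - ∫ x in K, f x ∂volume) :=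
      (smul_sub _ _ _).symm
    rw [hsm, norm_smul, Real.norm_eq_abs, abs_of_nonneg
      (by positivity : (0:ℝ) ≤ ((r.factorial : ℝ))⁻¹)]
    exact mul_le_mul_of_nonneg_left (hbound a ha) (by positivity)
  refine ⟨part1, ?_⟩
  -- Part 2
  by_cases hFe : F = ∅
  · have : ∀ a : ℝ, 0 < a → phiVol r Λ V₀ K a = PhiVol r K := by
      intro a ha
      rw [hphi a ha, hunivcase hFe a ha, PhiVol]
    refine Tendsto.congr' ?_ tendsto_const_nhds
    filter_upwards [self_mem_nhdsWithin] with a ha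
    exact (this a ha).symm
  · have hFne : F.Nonempty := Set.nonempty_iff_ne_empty.mpr hFe
    rw [tendsto_iff_norm_sub_tendsto_zero]
    have hN1cpt : IsCompact (N (1 / C)) := by
      have hNcl : IsClosed (N (1 / C)) := isClosed_le (continuous_infDist_pt F) continuous_const
      obtain ⟨R, hR⟩ := hK.isBounded.subset_closedBall 0
      have hNsub : N (1 / C) ⊆ closedBall 0 ((1 / C) * C + 1 + R) := by
        intro x hx
        have hlt : infDist x F < (1 / C) * C + 1 := lt_of_le_of_lt hx (by linarith)
        obtain ⟨y, hyF, hxy⟩ := (infDist_lt_iff hFne).mp hlt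
        have hyK : y ∈ K := by
          have : y ∈ closure K := frontier_subset_closure hyF
          rwa [hK.isClosed.closure_eq] at this
        have hyR : ‖y‖ ≤ R := by
          have := hR hyK
          rwa [mem_closedBall, dist_zero_right] at this
        rw [mem_closedBall, dist_zero_right]
        calc ‖x‖ ≤ dist x y + ‖y‖ := by
              rw [dist_eq_norm]
              simpa using norm_add_le (x - y) y
          _ ≤ (1 / C) * C + 1 + R := by linarith
      exact isCompact_of_isClosed_isBounded hNcl ((isBounded_closedBall).subset hNsub)
    -- the bound tends to 0
    have hB0 : Tendsto (fun a : ℝ => ∫ x in N a, ‖x‖ ^ r ∂volume)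
        (nhdsWithin 0 (Set.Ioi 0)) (nhds 0) := by
      have hrw : ∀ a : ℝ, (∫ x in N a, ‖x‖ ^ r ∂volume) =
          ∫ x, Set.indicator (N a) (fun x : EuclideanSpace ℝ (Fin d) => ‖x‖ ^ r) x ∂volume := fun a =>
        (integral_indicator (hNmeas a)).symm
      simp only [hrw]
      have h0 : (0 : ℝ) = ∫ _x : EuclideanSpace ℝ (Fin d), (0 : ℝ) ∂volume := by simp
      have htend : Tendsto (fun a : ℝ => ∫ x, Set.indicator (N a)
            (fun x : EuclideanSpace ℝ (Fin d) => ‖x‖ ^ r) x ∂volume)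
          (nhdsWithin (0:ℝ) (Set.Ioi 0))
          (nhds (∫ _x : EuclideanSpace ℝ (Fin d), (0:ℝ) ∂volume)) := by
        apply tendsto_integral_filter_of_dominated_convergence
          (Set.indicator (N (1 / C)) fun x : EuclideanSpace ℝ (Fin d) => ‖x‖ ^ r)
        · exact Filter.Eventually.of_forall fun a =>
            (((continuous_norm.pow r).measurable).indicator (hNmeas a)).aestronglyMeasurable
        · have hIoo : Set.Ioo (0:ℝ) (1 / C) ∈ nhdsWithin (0:ℝ) (Set.Ioi 0) :=
            Ioo_mem_nhdsGT_of_mem ⟨le_refl 0, by positivity⟩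
          filter_upwards [hIoo] with a ha
          apply Filter.Eventually.of_forall
          intro x
          rw [Real.norm_eq_abs, abs_of_nonneg (Set.indicator_nonneg (fun y _ => by positivity) x)]
          apply Set.indicator_le_indicator_of_subset
          · intro y hy
            simp only [hNdef, Set.mem_setOf_eq] at hy ⊢
            calc infDist y F ≤ a * C := hy
              _ ≤ (1 / C) * C := by
                  apply mul_le_mul_of_nonneg_right _ hC.le
                  exact ha.2.le
          · intro y; positivity
        · exact (integrable_indicator_iff (hNmeas (1 / C))).mpr
            ((continuous_norm.pow r).locallyIntegrable.integrableOn_isCompact hN1cpt)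
        · have hae : ∀ᵐ x : EuclideanSpace ℝ (Fin d) ∂volume, x ∉ F := by
            exact measure_eq_zero_iff_ae_notMem.mp hbd
          filter_upwards [hae] with x hx
          have hpos : 0 < infDist x F :=
            (IsClosed.notMem_iff_infDist_pos (hFdef ▸ isClosed_frontier) hFne).mp hx
          have hev : ∀ᶠ a in nhdsWithin (0:ℝ) (Set.Ioi 0),
              Set.indicator (N a) (fun x : EuclideanSpace ℝ (Fin d) => ‖x‖ ^ r) x = 0 := by
            have hIoo : Set.Ioo (0:ℝ) (infDist x F / C) ∈ nhdsWithin (0:ℝ) (Set.Ioi 0) :=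
              Ioo_mem_nhdsGT_of_mem ⟨le_refl 0, by positivity⟩
            filter_upwards [hIoo] with a ha
            apply Set.indicator_of_notMem
            simp only [hNdef, Set.mem_setOf_eq, not_le]
            calc a * C < (infDist x F / C) * C := by
                  exact mul_lt_mul_of_pos_right ha.2 hC
              _ = infDist x F := by field_simp
          exact Tendsto.congr' (by filter_upwards [hev] with a ha; exact ha.symm)
            tendsto_const_nhds
      have h0' : (∫ _x : EuclideanSpace ℝ (Fin d), (0:ℝ) ∂volume) = 0 := by simp
      rw [h0'] at htend
      exact htend
    have hB0' : Tendsto (fun a : ℝ => ((r.factorial : ℝ))⁻¹ * ∫ x in N a, ‖x‖ ^ r ∂volume)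
        (nhdsWithin 0 (Set.Ioi 0)) (nhds 0) := by
      simpa using hB0.const_mul ((r.factorial : ℝ))⁻¹
    apply squeeze_zero'
    · filter_upwards with a
      exact norm_nonneg _
    · filter_upwards [self_mem_nhdsWithin] with a ha
      exact part1 a ha
    · exact hB0'
end

section
/- Let ρ, R > 0. There is a constant C = C(d,R,ρ) > 0 such that for all nonempty compact sets K, K_0 ⊆ B(0,ρ) ⊆ R^d, the parallel volumes satisfy |ℋ^d(K^R) − ℋ^d(K_0^R)| ≤ C · d_H(K, K_0). -/
open Metric MeasureTheory Set Module
open scoped RealInnerProductSpace ENNReal NNReal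

variable {d : ℕ}

local notation "E" => EuclideanSpace ℝ (Fin d)

lemma pow_one_add_le (n : ℕ) {t : ℝ} (h0 : 0 ≤ t) (h1 : t ≤ 1) :
    (1 + t) ^ n ≤ 1 + ((2:ℝ) ^ n - 1) * t := by
  induction n with
  | zero => simp
  | succ n ih =>
    have h2 : (1:ℝ) ≤ 2 ^ n := by simpa using pow_le_pow_right₀ (by norm_num : (1:ℝ) ≤ 2) (Nat.zero_le n)
    calc (1 + t) ^ (n + 1) = (1 + t) ^ n * (1 + t) := pow_succ _ _
      _ ≤ (1 + ((2:ℝ) ^ n - 1) * t) * (1 + t) :=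
          mul_le_mul_of_nonneg_right ih (by linarith)
      _ ≤ 1 + ((2:ℝ) ^ (n + 1) - 1) * t := by
          have ha : (0:ℝ) ≤ 2 ^ n - 1 := by linarith
          have hb : (0:ℝ) ≤ t - t ^ 2 := by nlinarith
          have := mul_nonneg ha hb
          ring_nf
          ring_nf at this
          nlinarith [this]


lemma inner_nonneg_of_nearest {x y px py : EuclideanSpace ℝ (Fin d)}
    (h1 : ‖x - px‖ ≤ ‖x - py‖) (h2 : ‖y - py‖ ≤ ‖y - px‖) :
    0 ≤ ⟪x - y, px - py⟫ := by
  have h1' : ‖x - px‖ ^ 2 ≤ ‖x - py‖ ^ 2 := pow_le_pow_left₀ (norm_nonneg _) h1 2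
  have h2' : ‖y - py‖ ^ 2 ≤ ‖y - px‖ ^ 2 := pow_le_pow_left₀ (norm_nonneg _) h2 2
  have e1 : x - py = (x - px) + (px - py) := by abel
  have e2 : y - px = (y - py) + (py - px) := by abel
  rw [e1, norm_add_sq_real] at h1'
  rw [e2, norm_add_sq_real] at h2'
  have hT : ⟪x - y, px - py⟫ =
      ⟪x - px, px - py⟫ + ⟪y - py, py - px⟫ + ‖px - py‖ ^ 2 := by
    have e3 : x - y = (x - px) + (-(y - py)) + (px - py) := by abel
    rw [e3, inner_add_left, inner_add_left, inner_neg_left, real_inner_self_eq_norm_sq]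
    have : ⟪y - py, px - py⟫ = -⟪y - py, py - px⟫ := by
      rw [← neg_sub py px, inner_neg_right]
    rw [this]; ring
  have hnv : ‖py - px‖ = ‖px - py‖ := norm_sub_rev _ _
  rw [hnv] at h2'
  linarith

lemma smul_add_smul_norm_lower {a b : ℝ} (ha : 0 ≤ a) (hb : 0 ≤ b)
    {u v : EuclideanSpace ℝ (Fin d)} (huv : 0 ≤ ⟪u, v⟫) :
    a * ‖u‖ ≤ ‖a • u + b • v‖ := by
  have hsq : (a * ‖u‖) ^ 2 ≤ ‖a • u + b • v‖ ^ 2 := by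
    rw [norm_add_sq_real, norm_smul, norm_smul, real_inner_smul_left, real_inner_smul_right,
      Real.norm_eq_abs, Real.norm_eq_abs, abs_of_nonneg ha, abs_of_nonneg hb]
    nlinarith [mul_nonneg (mul_nonneg ha hb) huv, sq_nonneg (b * ‖v‖)]
  exact (pow_le_pow_iff_left₀ (by positivity) (norm_nonneg _) (two_ne_zero)).1 hsq

/-- Kneser-type inequality. -/
lemma kneser_ineq (K : Set E) (hK : IsCompact K) (hne : K.Nonempty)
    {r s : ℝ} (hr : 0 < r) (hrs : r ≤ s) :
    volume {x : E | infDist x K ≤ s} ≤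
      ENNReal.ofReal ((s / r) ^ d) * volume {x : E | infDist x K ≤ r} := by
  have hs : 0 < s := hr.trans_le hrs
  set lam : ℝ := s / r with hlam
  have hlam1 : 1 ≤ lam := (one_le_div hr).2 hrs
  have hlam0 : 0 < lam := lt_of_lt_of_le one_pos hlam1
  have hex : ∀ x : E, ∃ y ∈ K, infDist x K = dist x y :=
    fun x => hK.exists_infDist_eq_dist hne x
  set p : E → E := fun x => (hex x).choose with hp
  have hpK : ∀ x, p x ∈ K := fun x => (hex x).choose_spec.1
  have hpd : ∀ x, infDist x K = dist x (p x) := fun x => (hex x).choose_spec.2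
  -- monotonicity of the nearest point map
  have key : ∀ x y : E, 0 ≤ ⟪x - y, p x - p y⟫ := by
    intro x y
    have h1 : dist x (p x) ≤ dist x (p y) := (hpd x) ▸ infDist_le_dist_of_mem (hpK y)
    have h2 : dist y (p y) ≤ dist y (p x) := (hpd y) ▸ infDist_le_dist_of_mem (hpK x)
    rw [dist_eq_norm, dist_eq_norm] at h1
    rw [dist_eq_norm, dist_eq_norm] at h2
    exact inner_nonneg_of_nearest h1 h2
  -- the contraction
  set F : E → E := fun x => (1 / lam) • x + (1 - 1 / lam) • p x with hF
  have hFsub : ∀ x y : E, F x - F y =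
      (1 / lam) • (x - y) + (1 - 1 / lam) • (p x - p y) := by
    intro x y; simp only [hF, smul_sub]; abel
  have hanti : AntilipschitzWith (Real.toNNReal lam) F := by
    apply AntilipschitzWith.of_le_mul_dist
    intro x y
    have hb : (0:ℝ) ≤ 1 - 1 / lam := by
      have : 1 / lam ≤ 1 := by
        rw [div_le_one hlam0]; exact hlam1
      linarith
    have hnorm : (1 / lam) * ‖x - y‖ ≤ ‖F x - F y‖ := by
      rw [hFsub]
      exact smul_add_smul_norm_lower (by positivity) hb (key x y)
    rw [dist_eq_norm, dist_eq_norm, Real.coe_toNNReal _ hlam0.le]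
    calc ‖x - y‖ = lam * ((1 / lam) * ‖x - y‖) := by field_simp
      _ ≤ lam * ‖F x - F y‖ := mul_le_mul_of_nonneg_left hnorm hlam0.le
  -- F maps the big set into the small set
  have himg : F '' {x : E | infDist x K ≤ s} ⊆ {x : E | infDist x K ≤ r} := by
    rintro _ ⟨x, hx, rfl⟩
    have hfx : F x - p x = (1 / lam) • (x - p x) := by
      simp only [hF, smul_sub, sub_smul, one_smul]; abel
    have : infDist (F x) K ≤ dist (F x) (p x) := infDist_le_dist_of_mem (hpK x)
    rw [dist_eq_norm, hfx, norm_smul, Real.norm_eq_abs, abs_of_pos (by positivity)] at this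
    have hxd : ‖x - p x‖ ≤ s := by rw [← dist_eq_norm, ← hpd x]; exact hx
    have : infDist (F x) K ≤ (1 / lam) * s :=
      this.trans (mul_le_mul_of_nonneg_left hxd (by positivity))
    have hrs' : (1 / lam) * s = r := by
      rw [hlam]; field_simp
    exact mem_setOf_eq ▸ (hrs' ▸ this)
  -- Hausdorff measure is a Haar measure, hence a multiple of volume
  have hfr : ((finrank ℝ (EuclideanSpace ℝ (Fin d)) : ℕ) : ℝ) = (d : ℝ) := by
    rw [finrank_euclideanSpace_fin]
  haveI h1 : Measure.IsAddHaarMeasure (μH[(d : ℝ)] : Measure E) := by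
    rw [← hfr]; exact isAddHaarMeasure_hausdorffMeasure
  set c : NNReal := Measure.addHaarScalarFactor (μH[(d : ℝ)] : Measure E) (volume : Measure E)
    with hc
  have hceq : (μH[(d : ℝ)] : Measure E) = c • (volume : Measure E) :=
    Measure.isAddLeftInvariant_eq_smul _ _
  have hcpos : 0 < c := Measure.addHaarScalarFactor_pos_of_isAddHaarMeasure _ _
  -- the measure inequality
  have hmeas := hanti.le_hausdorffMeasure_image (d := (d:ℝ)) (by positivity)
    {x : E | infDist x K ≤ s}
  have hmono : μH[(d:ℝ)] (F '' {x : E | infDist x K ≤ s}) ≤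
      μH[(d:ℝ)] {x : E | infDist x K ≤ r} := measure_mono himg
  have hcoef : ((Real.toNNReal lam : ℝ≥0∞)) ^ (d : ℝ) = ENNReal.ofReal (lam ^ d) := by
    rw [← Real.rpow_natCast lam d]
    exact ENNReal.ofReal_rpow_of_pos hlam0
  have hcoef' : ((Real.toNNReal lam : ℝ≥0∞)) = ENNReal.ofReal lam := rfl
  have hchain : μH[(d:ℝ)] {x : E | infDist x K ≤ s} ≤
      ENNReal.ofReal (lam ^ d) * μH[(d:ℝ)] {x : E | infDist x K ≤ r} := by
    calc μH[(d:ℝ)] {x : E | infDist x K ≤ s}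
        ≤ (Real.toNNReal lam : ℝ≥0∞) ^ (d:ℝ) * μH[(d:ℝ)] (F '' {x : E | infDist x K ≤ s}) :=
          hmeas
      _ ≤ (Real.toNNReal lam : ℝ≥0∞) ^ (d:ℝ) * μH[(d:ℝ)] {x : E | infDist x K ≤ r} :=
          mul_le_mul_right hmono _
      _ = ENNReal.ofReal (lam ^ d) * μH[(d:ℝ)] {x : E | infDist x K ≤ r} := by rw [hcoef]
  rw [hceq] at hchain
  simp only [Measure.smul_apply, ENNReal.smul_def, smul_eq_mul] at hchain
  rw [mul_left_comm] at hchain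
  exact (ENNReal.mul_le_mul_iff_right (a := (c : ℝ≥0∞))
    (by exact_mod_cast hcpos.ne') ENNReal.coe_ne_top).1 hchain

lemma infDist_set_subset_closedBall {K : Set E} (hK : IsCompact K) (hne : K.Nonempty)
    {ρ s : ℝ} (hKb : K ⊆ closedBall 0 ρ) :
    {x : E | infDist x K ≤ s} ⊆ closedBall 0 (ρ + s) := by
  intro x hx
  obtain ⟨y, hyK, hy⟩ := hK.exists_infDist_eq_dist hne x
  have h1 : dist x y ≤ s := by rw [← hy]; exact hx
  have h2 : dist y 0 ≤ ρ := by simpa [mem_closedBall] using hKb hyK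
  have h3 : dist x 0 ≤ dist x y + dist y 0 := dist_triangle _ _ _
  simp only [mem_closedBall]
  linarith

lemma one_sided (ρ R : ℝ) (hρ : 0 < ρ) (hR : 0 < R) (K K₀ : Set E)
    (hK : IsCompact K) (hKne : K.Nonempty) (hK₀ : IsCompact K₀) (hK₀ne : K₀.Nonempty)
    (hKb : K ⊆ closedBall 0 ρ) (hK₀b : K₀ ⊆ closedBall 0 ρ) :
    (volume {x : E | infDist x K₀ ≤ R}).toReal - (volume {x : E | infDist x K ≤ R}).toReal ≤
      (2:ℝ) ^ d * ((volume (closedBall (0:E) (ρ + 2*R))).toReal + 1) / R *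
        hausdorffDist K K₀ := by
  set h := hausdorffDist K K₀ with hh
  have hh0 : 0 ≤ h := hausdorffDist_nonneg
  set V := (volume (closedBall (0:E) (ρ + 2*R))).toReal with hV
  have hV0 : 0 ≤ V := ENNReal.toReal_nonneg
  have hVfin : volume (closedBall (0:E) (ρ + 2*R)) ≠ ⊤ := measure_closedBall_lt_top.ne
  have hone : (1:ℝ) ≤ 2 ^ d := by
    simpa using pow_le_pow_right₀ (by norm_num : (1:ℝ) ≤ 2) (Nat.zero_le d)
  set a := (volume {x : E | infDist x K ≤ R}).toReal with ha
  set a₀ := (volume {x : E | infDist x K₀ ≤ R}).toReal with ha₀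
  have ha0 : 0 ≤ a := ENNReal.toReal_nonneg
  have hsubK : {x : E | infDist x K ≤ R} ⊆ closedBall (0:E) (ρ + 2*R) :=
    (infDist_set_subset_closedBall hK hKne hKb).trans
      (closedBall_subset_closedBall (by linarith))
  have hsubK₀ : {x : E | infDist x K₀ ≤ R} ⊆ closedBall (0:E) (ρ + 2*R) :=
    (infDist_set_subset_closedBall hK₀ hK₀ne hK₀b).trans
      (closedBall_subset_closedBall (by linarith))
  have hfinK : volume {x : E | infDist x K ≤ R} ≠ ⊤ :=
    ((measure_mono hsubK).trans_lt measure_closedBall_lt_top).ne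
  have haV : a ≤ V := ENNReal.toReal_mono hVfin (measure_mono hsubK)
  have ha₀V : a₀ ≤ V := ENNReal.toReal_mono hVfin (measure_mono hsubK₀)
  by_cases hcase : h ≤ R
  · have hedist : hausdorffEDist K K₀ ≠ ⊤ :=
      hausdorffEdist_ne_top_of_nonempty_of_bounded hKne hK₀ne hK.isBounded hK₀.isBounded
    have hincl : {x : E | infDist x K₀ ≤ R} ⊆ {x : E | infDist x K ≤ R + h} := by
      intro x hx
      have hid : infDist x K ≤ infDist x K₀ + hausdorffDist K₀ K :=
        infDist_le_infDist_add_hausdorffDist (by rwa [EMetric.hausdorffEdist_comm] at hedist)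
      rw [hausdorffDist_comm] at hid
      simp only [mem_setOf_eq] at hx ⊢
      linarith
    have hkn := kneser_ineq K hK hKne hR (le_add_of_nonneg_right hh0 : R ≤ R + h)
    have chain : volume {x : E | infDist x K₀ ≤ R} ≤
        ENNReal.ofReal (((R + h)/R) ^ d) * volume {x : E | infDist x K ≤ R} :=
      le_trans (measure_mono hincl) hkn
    have chainR : a₀ ≤ ((R + h)/R) ^ d * a := by
      have hne' : ENNReal.ofReal (((R + h)/R) ^ d) * volume {x : E | infDist x K ≤ R} ≠ ⊤ :=
        ENNReal.mul_ne_top ENNReal.ofReal_ne_top hfinK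
      have := ENNReal.toReal_mono hne' chain
      rwa [ENNReal.toReal_mul, ENNReal.toReal_ofReal (by positivity)] at this
    set t := h / R with htdef
    have ht0 : 0 ≤ t := by positivity
    have ht1 : t ≤ 1 := by rw [htdef, div_le_one hR]; exact hcase
    have hpow : ((R + h)/R) ^ d ≤ 1 + ((2:ℝ) ^ d - 1) * t := by
      have hq : (R + h)/R = 1 + t := by rw [htdef]; field_simp
      rw [hq]
      exact pow_one_add_le d ht0 ht1
    have e1 : a₀ ≤ (1 + ((2:ℝ) ^ d - 1) * t) * a :=
      chainR.trans (mul_le_mul_of_nonneg_right hpow ha0)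
    have hgoal : (2:ℝ) ^ d * (V + 1) / R * h = (2:ℝ) ^ d * (V + 1) * t := by
      rw [htdef]; ring
    rw [hgoal]
    nlinarith [mul_nonneg (mul_nonneg (by linarith : (0:ℝ) ≤ (2:ℝ) ^ d - 1) ht0)
        (by linarith : (0:ℝ) ≤ V - a),
      mul_nonneg ht0 (by linarith : (0:ℝ) ≤ (2:ℝ) ^ d + V)]
  · push_neg at hcase
    have hC0 : (0:ℝ) ≤ 2 ^ d * (V + 1) / R := by positivity
    have h1 : 2 ^ d * (V + 1) / R * R ≤ 2 ^ d * (V + 1) / R * h :=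
      mul_le_mul_of_nonneg_left hcase.le hC0
    have h2 : (2:ℝ) ^ d * (V + 1) / R * R = 2 ^ d * (V + 1) := by field_simp
    have h3 : V ≤ (2:ℝ) ^ d * (V + 1) := by nlinarith
    linarith

/-- For `ρ, R > 0` there is `C = C(d,R,ρ) > 0` such that for all nonempty compact
`K, K₀ ⊆ B(0,ρ)` the parallel volumes satisfy
`|ℋ^d(K^R) − ℋ^d(K₀^R)| ≤ C · d_H(K,K₀)`. -/
theorem parallel_volume_lipschitz {d : ℕ} (ρ R : ℝ) (hρ : 0 < ρ) (hR : 0 < R) :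
    ∃ C > (0 : ℝ), ∀ K K₀ : Set (EuclideanSpace ℝ (Fin d)),
      IsCompact K → K.Nonempty → IsCompact K₀ → K₀.Nonempty →
      K ⊆ closedBall 0 ρ → K₀ ⊆ closedBall 0 ρ →
      |(volume {x : EuclideanSpace ℝ (Fin d) | infDist x K ≤ R}).toReal -
          (volume {x : EuclideanSpace ℝ (Fin d) | infDist x K₀ ≤ R}).toReal| ≤
        C * hausdorffDist K K₀ := by
  refine ⟨(2:ℝ) ^ d * ((volume (closedBall (0:EuclideanSpace ℝ (Fin d)) (ρ + 2*R))).toReal + 1)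
      / R + 1, by positivity, ?_⟩
  intro K K₀ hK hKne hK₀ hK₀ne hKb hK₀b
  have hh0 : 0 ≤ hausdorffDist K K₀ := hausdorffDist_nonneg
  rw [abs_sub_le_iff]
  constructor
  · have h1 := one_sided ρ R hρ hR K₀ K hK₀ hK₀ne hK hKne hK₀b hKb
    rw [hausdorffDist_comm] at h1
    linarith
  · have h2 := one_sided ρ R hρ hR K K₀ hK hKne hK₀ hK₀ne hKb hK₀b
    linarith
end
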